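/- If S is a simplex all of whose edge lengths lie in [2, 2.51], then the dihedral angle of S along any edge is at most arccos(−29003/96999) ≈ 1.874444. -/

import Mathlib

set_option maxHeartbeats 4000000

/-- Monotonicity of `arccos`. -/
lemma my_arccos_anti {x y : ℝ} (hxy : x ≤ y) : Real.arccos y ≤ Real.arccos x := by
  rw [Real.arccos, Real.arccos]
  have := Real.monotone_arcsin hxy
  linarith

/-- The reduced corner inequality in three variables. -/
lemma my_core (a b c : ℝ) (ha : 4 ≤ a) (ha' : a ≤ 6.3001)
    (hb : 4 ≤ b) (hb' : b ≤ 6.3001) (hc : 4 ≤ c) (hc' : c ≤ 6.3001)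
    (hM : 0 ≤ (a+b-4)*(a+c-4) - 2*a*(b+c-6.3001)) :
    ((a+b-4)*(a+c-4) - 2*a*(b+c-6.3001))^2
      ≤ (29003/96999)^2 * ((4*a*b-(a+b-4)^2) * (4*a*c-(a+c-4)^2)) := by
  nlinarith [sq_nonneg (b-c), mul_nonneg (sub_nonneg.2 ha') (sub_nonneg.2 hb),
    mul_nonneg (sub_nonneg.2 ha') (sub_nonneg.2 hc),
    mul_nonneg (mul_nonneg (sub_nonneg.2 ha') (sub_nonneg.2 hb)) (sub_nonneg.2 hc),
    mul_nonneg hM (sub_nonneg.2 ha'), mul_nonneg hM (sub_nonneg.2 hb),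
    mul_nonneg hM (sub_nonneg.2 hc), sq_nonneg (b-4), sq_nonneg (c-4)]

/-- The key algebraic inequality in terms of inner products. -/
lemma my_key (a b c s t w : ℝ)
    (ha : 4 ≤ a) (ha' : a ≤ 6.3001)
    (hb : 4 ≤ b) (hb' : b ≤ 6.3001)
    (hc : 4 ≤ c) (hc' : c ≤ 6.3001)
    (hd : 4 ≤ a + b - 2*s) (hd' : a + b - 2*s ≤ 6.3001)
    (he : 4 ≤ a + c - 2*t) (he' : a + c - 2*t ≤ 6.3001)
    (hf : 4 ≤ b + c - 2*w) (hf' : b + c - 2*w ≤ 6.3001)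
    (hN : a*w - s*t ≤ 0) :
    (a*w - s*t)^2 ≤ (29003/96999)^2 * ((a*b - s^2) * (a*c - t^2)) := by
  have h2s : 0 ≤ 2*s := by linarith
  have h2t : 0 ≤ 2*t := by linarith
  have hs4 : 2*s ≤ a + b - 4 := by linarith
  have ht4 : 2*t ≤ a + c - 4 := by linarith
  -- -4N ≤ M
  have hMN : -(4*(a*w - s*t)) ≤ (a+b-4)*(a+c-4) - 2*a*(b+c-6.3001) := by
    nlinarith [mul_nonneg (sub_nonneg.2 hs4) (by linarith : (0:ℝ) ≤ a+c-4),
      mul_nonneg h2s (sub_nonneg.2 ht4),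
      mul_nonneg (by linarith : (0:ℝ) ≤ 2*a) (by linarith : (0:ℝ) ≤ 6.3001 - (b+c-2*w))]
  have hM : 0 ≤ (a+b-4)*(a+c-4) - 2*a*(b+c-6.3001) := by linarith
  have hcore := my_core a b c ha ha' hb hb' hc hc' hM
  have hP2le : 4*a*b - (a+b-4)^2 ≤ 4*(a*b - s^2) := by
    nlinarith [mul_nonneg (sub_nonneg.2 hs4) (by linarith : (0:ℝ) ≤ a + b - 4 + 2*s)]
  have hP3le : 4*a*c - (a+c-4)^2 ≤ 4*(a*c - t^2) := by
    nlinarith [mul_nonneg (sub_nonneg.2 ht4) (by linarith : (0:ℝ) ≤ a + c - 4 + 2*t)]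
  have hP2pos : (0:ℝ) ≤ 4*a*b - (a+b-4)^2 := by nlinarith [sq_nonneg (a-b)]
  have hP3pos : (0:ℝ) ≤ 4*a*c - (a+c-4)^2 := by nlinarith [sq_nonneg (a-c)]
  have hN2 : (4*(a*w - s*t))^2 ≤ ((a+b-4)*(a+c-4) - 2*a*(b+c-6.3001))^2 := by
    nlinarith [mul_nonneg (by linarith : (0:ℝ) ≤ ((a+b-4)*(a+c-4) - 2*a*(b+c-6.3001)) + 4*(a*w-s*t))
      (by linarith : (0:ℝ) ≤ ((a+b-4)*(a+c-4) - 2*a*(b+c-6.3001)) - 4*(a*w-s*t))]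
  have hprod : (4*a*b - (a+b-4)^2) * (4*a*c - (a+c-4)^2)
      ≤ (4*(a*b - s^2)) * (4*(a*c - t^2)) :=
    mul_le_mul hP2le hP3le hP3pos (by linarith)
  have hk2 : (0:ℝ) ≤ (29003/96999)^2 := by norm_num
  have hstep := mul_le_mul_of_nonneg_left hprod hk2
  nlinarith [hN2, hcore, hstep]


lemma my_D2pos (a b s : ℝ) (ha : 4 ≤ a) (ha' : a ≤ 6.3001)
    (hb : 4 ≤ b) (hb' : b ≤ 6.3001)
    (hd : 4 ≤ a + b - 2*s) (hd' : a + b - 2*s ≤ 6.3001) :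
    0 < a*b - s^2 := by
  nlinarith [mul_nonneg (by linarith : (0:ℝ) ≤ a+b-4-2*s) (by linarith : (0:ℝ) ≤ a+b-4+2*s),
    mul_nonneg (by linarith : (0:ℝ) ≤ 6.3001-a) (by linarith : (0:ℝ) ≤ b-4),
    mul_nonneg (by linarith : (0:ℝ) ≤ 6.3001-b) (by linarith : (0:ℝ) ≤ a-4)]

lemma my_normpos (P : ℝ) (h0 : 0 ≤ P) (h2 : 0 < P^2) : 0 < P := by
  rcases h0.lt_or_eq with h | h
  · exact h
  · exfalso; rw [← h] at h2; simp at h2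

/-- The final real-variable inequality: the cosine bound. -/
lemma my_case (A B C S T W P Q I : ℝ)
    (ha : 4 ≤ A) (ha' : A ≤ 6.3001)
    (hb : 4 ≤ B) (hb' : B ≤ 6.3001)
    (hc : 4 ≤ C) (hc' : C ≤ 6.3001)
    (hd : 4 ≤ A + B - 2*S) (hd' : A + B - 2*S ≤ 6.3001)
    (he : 4 ≤ A + C - 2*T) (he' : A + C - 2*T ≤ 6.3001)
    (hf : 4 ≤ B + C - 2*W) (hf' : B + C - 2*W ≤ 6.3001)
    (hP : 0 < P) (hQ : 0 < Q)
    (hP2 : P^2 * A = A*B - S^2) (hQ2 : Q^2 * A = A*C - T^2)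
    (hIA : I * A = A*W - S*T) :
    -(29003/96999 : ℝ) * (P * Q) ≤ I := by
  have hApos : (0:ℝ) < A := by linarith
  rcases le_or_gt 0 I with hpos | hneg
  · have : (0:ℝ) ≤ (29003/96999 : ℝ) * (P * Q) := by positivity
    linarith
  · have hNle : A*W - S*T ≤ 0 := by nlinarith [mul_pos hApos (neg_pos.2 hneg)]
    have hk2 := my_key A B C S T W ha ha' hb hb' hc hc' hd hd' he he' hf hf' hNle
    have hsq : I^2 ≤ ((29003/96999 : ℝ) * (P * Q))^2 := by
      have hA2 : (0:ℝ) < A^2 := by positivity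
      have e1 : I^2 * A^2 = (A*W - S*T)^2 := by
        have : I^2 * A^2 = (I*A)^2 := by ring
        rw [this, hIA]
      have e2 : (P*Q)^2 * A^2 = (A*B - S^2) * (A*C - T^2) := by
        have : (P*Q)^2 * A^2 = (P^2*A) * (Q^2*A) := by ring
        rw [this, hP2, hQ2]
      nlinarith [hk2, e1, e2, hA2]
    have hRpos : (0:ℝ) < (29003/96999 : ℝ) * (P * Q) := by positivity
    nlinarith [hsq, hRpos, hneg]

noncomputable section

/-- The dihedral angle of the simplex (v0,v1,v2,v3) along the edge v0v1. -/
def dihedralAngle (v0 v1 v2 v3 : EuclideanSpace ℝ (Fin 3)) : ℝ :=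
  InnerProductGeometry.angle
    ((v2 - v0) - (((inner ℝ (v2 - v0) (v1 - v0) : ℝ)) / ‖v1 - v0‖^2) • (v1 - v0))
    ((v3 - v0) - (((inner ℝ (v3 - v0) (v1 - v0) : ℝ)) / ‖v1 - v0‖^2) • (v1 - v0))

/-- If all six edge lengths of a simplex lie in [2, 2.51] (a quasi-regular
tetrahedron), then the dihedral angle along any edge is at most
arccos(−29003/96999). Since the hypothesis is symmetric in the four vertices,
the stated conclusion for the edge p0p1 covers every edge. -/
theorem dihedral_le_dihmax
    (p : Fin 4 → EuclideanSpace ℝ (Fin 3))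
    (h : ∀ i j, i ≠ j → dist (p i) (p j) ∈ Set.Icc (2:ℝ) 2.51) :
    dihedralAngle (p 0) (p 1) (p 2) (p 3) ≤ Real.arccos (-(29003/96999)) := by
  have h01 := h 0 1 (by decide)
  have h02 := h 0 2 (by decide)
  have h03 := h 0 3 (by decide)
  have h12 := h 1 2 (by decide)
  have h13 := h 1 3 (by decide)
  have h23 := h 2 3 (by decide)
  clear h
  set u : EuclideanSpace ℝ (Fin 3) := p 1 - p 0 with hu
  set x : EuclideanSpace ℝ (Fin 3) := p 2 - p 0 with hx
  set y : EuclideanSpace ℝ (Fin 3) := p 3 - p 0 with hy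
  have sqb : ∀ r : ℝ, 2 ≤ r → r ≤ 2.51 → 4 ≤ r^2 ∧ r^2 ≤ 6.3001 := by
    intro r h1 h2; constructor <;> nlinarith
  have du : dist (p 0) (p 1) = ‖u‖ := by rw [dist_eq_norm']
  have dx : dist (p 0) (p 2) = ‖x‖ := by rw [dist_eq_norm']
  have dy : dist (p 0) (p 3) = ‖y‖ := by rw [dist_eq_norm']
  have dxu : dist (p 1) (p 2) = ‖x - u‖ := by
    rw [dist_eq_norm']; congr 1; rw [hx, hu]; abel
  have dyu : dist (p 1) (p 3) = ‖y - u‖ := by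
    rw [dist_eq_norm']; congr 1; rw [hy, hu]; abel
  have dxy : dist (p 2) (p 3) = ‖y - x‖ := by
    rw [dist_eq_norm']; congr 1; rw [hx, hy]; abel
  have ba := sqb _ (du ▸ h01.1) (du ▸ h01.2)
  have bb := sqb _ (dx ▸ h02.1) (dx ▸ h02.2)
  have bc := sqb _ (dy ▸ h03.1) (dy ▸ h03.2)
  have bd := sqb _ (dxu ▸ h12.1) (dxu ▸ h12.2)
  have be := sqb _ (dyu ▸ h13.1) (dyu ▸ h13.2)
  have bf := sqb _ (dxy ▸ h23.1) (dxy ▸ h23.2)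
  clear h01 h02 h03 h12 h13 h23 du dx dy dxu dyu dxy
  have nxu : ‖x - u‖^2 = ‖x‖^2 - 2*(inner ℝ x u : ℝ) + ‖u‖^2 := norm_sub_sq_real x u
  have nyu : ‖y - u‖^2 = ‖y‖^2 - 2*(inner ℝ y u : ℝ) + ‖u‖^2 := norm_sub_sq_real y u
  have nxy : ‖y - x‖^2 = ‖y‖^2 - 2*(inner ℝ y x : ℝ) + ‖x‖^2 := norm_sub_sq_real y x
  set A : ℝ := ‖u‖^2 with hA
  set B : ℝ := ‖x‖^2 with hB
  set C : ℝ := ‖y‖^2 with hC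
  set S : ℝ := (inner ℝ x u : ℝ) with hS
  set T : ℝ := (inner ℝ y u : ℝ) with hT
  set W : ℝ := (inner ℝ x y : ℝ) with hW
  have hWW : (inner ℝ y x : ℝ) = W := (real_inner_comm x y).trans hW.symm
  rw [hWW] at nxy
  have hApos : (0:ℝ) < A := by linarith [ba.1]
  have hAne : A ≠ 0 := ne_of_gt hApos
  set X : EuclideanSpace ℝ (Fin 3) := x - (S / A) • u with hXdef
  set Y : EuclideanSpace ℝ (Fin 3) := y - (T / A) • u with hYdef
  have hXY : (inner ℝ X Y : ℝ) = W - S*T/A := by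
    rw [hXdef, hYdef]
    simp only [inner_sub_left, inner_sub_right, real_inner_smul_left, real_inner_smul_right]
    rw [real_inner_comm y u, real_inner_self_eq_norm_sq u]
    rw [← hA, ← hS, ← hT, ← hW]
    field_simp
    ring
  have hX2 : ‖X‖^2 = B - S^2/A := by
    rw [← real_inner_self_eq_norm_sq, hXdef]
    simp only [inner_sub_left, inner_sub_right, real_inner_smul_left, real_inner_smul_right]
    rw [real_inner_comm x u, real_inner_self_eq_norm_sq u, real_inner_self_eq_norm_sq x]
    rw [← hA, ← hS, ← hB]
    field_simp
    ring
  have hY2 : ‖Y‖^2 = C - T^2/A := by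
    rw [← real_inner_self_eq_norm_sq, hYdef]
    simp only [inner_sub_left, inner_sub_right, real_inner_smul_left, real_inner_smul_right]
    rw [real_inner_comm y u, real_inner_self_eq_norm_sq u, real_inner_self_eq_norm_sq y]
    rw [← hA, ← hT, ← hC]
    field_simp
    ring
  have hbd1 : 4 ≤ A + B - 2*S := by linarith [bd.1]
  have hbd2 : A + B - 2*S ≤ 6.3001 := by linarith [bd.2]
  have hbe1 : 4 ≤ A + C - 2*T := by linarith [be.1]
  have hbe2 : A + C - 2*T ≤ 6.3001 := by linarith [be.2]
  have hbf1 : 4 ≤ B + C - 2*W := by linarith [bf.1]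
  have hbf2 : B + C - 2*W ≤ 6.3001 := by linarith [bf.2]
  have hD2pos : 0 < A*B - S^2 := my_D2pos A B S ba.1 ba.2 bb.1 bb.2 hbd1 hbd2
  have hD3pos : 0 < A*C - T^2 := my_D2pos A C T ba.1 ba.2 bc.1 bc.2 hbe1 hbe2
  have hX2' : ‖X‖^2 * A = A*B - S^2 := by rw [hX2]; field_simp
  have hY2' : ‖Y‖^2 * A = A*C - T^2 := by rw [hY2]; field_simp
  have hXpos : 0 < ‖X‖ := by
    refine my_normpos _ (norm_nonneg X) ?_
    have : ‖X‖^2 = (A*B - S^2)/A := by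
      rw [← hX2']; field_simp
    rw [this]; exact div_pos hD2pos hApos
  have hYpos : 0 < ‖Y‖ := by
    refine my_normpos _ (norm_nonneg Y) ?_
    have : ‖Y‖^2 = (A*C - T^2)/A := by
      rw [← hY2']; field_simp
    rw [this]; exact div_pos hD3pos hApos
  have hprod : 0 < ‖X‖ * ‖Y‖ := mul_pos hXpos hYpos
  have hIA : (inner ℝ X Y : ℝ) * A = A*W - S*T := by rw [hXY]; field_simp
  have goal2 : -(29003/96999 : ℝ) ≤ (inner ℝ X Y : ℝ) / (‖X‖ * ‖Y‖) := by
    rw [le_div_iff₀ hprod]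
    exact my_case A B C S T W ‖X‖ ‖Y‖ (inner ℝ X Y : ℝ) ba.1 ba.2 bb.1 bb.2 bc.1 bc.2
      hbd1 hbd2 hbe1 hbe2 hbf1 hbf2 hXpos hYpos hX2' hY2' hIA
  have hdef : dihedralAngle (p 0) (p 1) (p 2) (p 3)
      = Real.arccos ((inner ℝ X Y : ℝ) / (‖X‖ * ‖Y‖)) := by
    rw [dihedralAngle, InnerProductGeometry.angle]
  rw [hdef]
  exact my_arccos_anti goal2
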